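/- (Necessity in the characterization $QA_{\varphi,\psi}=\Lambda_\varphi$ iff $\psi\asymp 1$.) If there exist constants $K_1,K_2>0$ such that $K_1\,\|f\|_{\Lambda_\varphi}\le\|f\|_{\varphi,\psi}\le K_2\,\|f\|_{\Lambda_\varphi}$ for every measurable function $f$ on $[0,1]$, then $\psi$ is bounded on $[1,\infty)$ (hence $\psi\asymp 1$ on $[1,\infty)$, since $\psi$ is non-decreasing with $\psi(1)>0$). -/

import Mathlib

open MeasureTheory ENNReal Set Filter Topology

noncomputable section

/-- Lebesgue measure restricted to the interval `[0,1]`. -/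
def μ01 : Measure ℝ := volume.restrict (Set.Icc 0 1)

/-- `φ : [0,1] → [0,∞)` is concave, non-decreasing, and vanishes only at the origin. -/
structure IsPhi (φ : ℝ → ℝ) : Prop where
  concave : ConcaveOn ℝ (Set.Icc 0 1) φ
  mono : MonotoneOn φ (Set.Icc 0 1)
  zero : φ 0 = 0
  pos : ∀ t : ℝ, 0 < t → t ≤ 1 → 0 < φ t

/-- `ψ : [0,∞) → [0,∞)` is concave, non-decreasing, and vanishes only at the origin. -/
structure IsPsi (ψ : ℝ → ℝ) : Prop where
  concave : ConcaveOn ℝ (Set.Ici 0) ψ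
  mono : MonotoneOn ψ (Set.Ici 0)
  zero : ψ 0 = 0
  pos : ∀ t : ℝ, 0 < t → 0 < ψ t

/-- A sequence `g` of nonnegative `L^∞` functions with `|f| ≤ ∑ₙ gₙ` a.e. -/
def Admissible (f : ℝ → ℝ) (g : ℕ → ℝ → ℝ) : Prop :=
  (∀ n, AEMeasurable (g n) μ01) ∧
  (∀ n, eLpNorm (g n) ⊤ μ01 < ⊤) ∧
  (∀ n x, 0 ≤ g n x) ∧
  (∀ᵐ x ∂μ01, ENNReal.ofReal |f x| ≤ ∑' n : ℕ, ENNReal.ofReal (g n x))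

/-- The cost `∑ₙ ψ(n) ‖gₙ‖_∞ φ(‖gₙ‖₁/‖gₙ‖_∞)` of a decomposition (index shifted by 1;
`0/0 = 0` by the `ℝ≥0∞` division convention, and `φ 0 = 0`). -/
def seqCost (φ ψ : ℝ → ℝ) (g : ℕ → ℝ → ℝ) : ℝ≥0∞ :=
  ∑' n : ℕ, ENNReal.ofReal
    (ψ ((n : ℝ) + 1) * (eLpNorm (g n) ⊤ μ01).toReal *
      φ ((eLpNorm (g n) 1 μ01 / eLpNorm (g n) ⊤ μ01).toReal))

/-- The quasi-norm `‖f‖_{φ,ψ}` (equal to `∞` when no admissible decomposition exists). -/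
def QANorm (φ ψ : ℝ → ℝ) (f : ℝ → ℝ) : ℝ≥0∞ :=
  ⨅ (g : ℕ → ℝ → ℝ) (_ : Admissible f g), seqCost φ ψ g

/-- Membership in the space `QA_{φ,ψ}`. -/
def MemQA (φ ψ : ℝ → ℝ) (f : ℝ → ℝ) : Prop :=
  AEMeasurable f μ01 ∧ QANorm φ ψ f < ⊤

/-- The decreasing rearrangement `f*` of `f` on `[0,1]`. -/
def decRearr (f : ℝ → ℝ) (t : ℝ) : ℝ :=
  sInf {s : ℝ | 0 ≤ s ∧ μ01 {x | s < |f x|} ≤ ENNReal.ofReal t}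

/-- The limit `ζ(0⁺)` of a non-decreasing function `ζ` on `[0,1]`. -/
def limZero (ζ : ℝ → ℝ) : ℝ := sInf (ζ '' Set.Ioc 0 1)

/-- The Lorentz norm `‖f‖_{Λ_ζ} = ∫₀¹ f* dζ = ‖f‖_∞ ζ(0⁺) + ∫₀¹ f*(s) ζ'(s) ds`
(for `ζ` concave the derivative exists a.e. and `ζ` is absolutely continuous on `(0,1]`). -/
def lorentzNorm (ζ : ℝ → ℝ) (f : ℝ → ℝ) : ℝ≥0∞ :=
  eLpNorm f ⊤ μ01 * ENNReal.ofReal (limZero ζ) +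
    ∫⁻ s in Set.Ioc (0:ℝ) 1, ENNReal.ofReal (decRearr f s * deriv ζ s)

/-- Membership in the Lorentz space `Λ_ζ`. -/
def MemLorentz (ζ : ℝ → ℝ) (f : ℝ → ℝ) : Prop :=
  AEMeasurable f μ01 ∧ lorentzNorm ζ f < ⊤

/-- The quasi-concave function `φ_s(t) = inf_n max{sₙ,t} (φ(sₙ)/sₙ) ψ(n)` (index shifted by 1). -/
def phiSeq (φ ψ : ℝ → ℝ) (s : ℕ → ℝ) (t : ℝ) : ℝ :=
  if t = 0 then 0 else ⨅ n : ℕ, max (s n) t * (φ (s n) / s n) * ψ ((n : ℝ) + 1)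

/-- The function `τ(t) = φ(t) ψ(logbar(φ(t)/t))` with `logbar t = 1 + log⁺ t`. -/
def tauF (φ ψ : ℝ → ℝ) (t : ℝ) : ℝ :=
  if t = 0 then 0 else φ t * ψ (1 + max (Real.log (φ t / t)) 0)

namespace Stmt19Aux

variable {φ ψ : ℝ → ℝ}

lemma phi_nonneg (hφ : IsPhi φ) {x : ℝ} (hx : 0 ≤ x) (hx1 : x ≤ 1) : 0 ≤ φ x := by
  rcases eq_or_lt_of_le hx with h | h
  · simp [← h, hφ.zero]
  · exact (hφ.pos x h hx1).le

lemma phi_superlin (hφ : IsPhi φ) {x l : ℝ} (hx : 0 ≤ x) (hx1 : x ≤ 1)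
    (hl : 0 ≤ l) (hl1 : l ≤ 1) : l * φ x ≤ φ (l * x) := by
  have h := hφ.concave.2 (show x ∈ Set.Icc (0:ℝ) 1 from ⟨hx, hx1⟩)
    (show (0:ℝ) ∈ Set.Icc (0:ℝ) 1 by constructor <;> norm_num)
    hl (by linarith : (0:ℝ) ≤ 1 - l) (by ring)
  simpa [hφ.zero, smul_eq_mul] using h

lemma phi_mono' (hφ : IsPhi φ) {x y : ℝ} (hx : 0 ≤ x) (hxy : x ≤ y) (hy : y ≤ 1) :
    φ x ≤ φ y :=
  hφ.mono ⟨hx, le_trans hxy hy⟩ ⟨le_trans hx hxy, hy⟩ hxy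

lemma phi_double (hφ : IsPhi φ) {x : ℝ} (hx : 0 ≤ x) (hx1 : 2 * x ≤ 1) :
    φ (2 * x) ≤ 2 * φ x := by
  have h := phi_superlin hφ (x := 2 * x) (l := 1/2) (by linarith) hx1 (by norm_num) (by norm_num)
  have he : (1/2 : ℝ) * (2 * x) = x := by ring
  rw [he] at h
  linarith

lemma phi_quadruple (hφ : IsPhi φ) {x : ℝ} (hx : 0 ≤ x) (hx1 : 4 * x ≤ 1) :
    φ (4 * x) ≤ 4 * φ x := by
  have h1 : φ (4 * x) ≤ 2 * φ (2 * x) := by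
    have h := phi_double hφ (x := 2 * x) (by linarith) (by linarith)
    calc φ (4 * x) = φ (2 * (2 * x)) := by ring_nf
      _ ≤ 2 * φ (2 * x) := h
  have h2 : φ (2 * x) ≤ 2 * φ x := phi_double hφ hx (by linarith)
  linarith

/-- The key monotonicity: `t ↦ t φ(s/t)` is non-decreasing. -/
lemma phi_keychain (hφ : IsPhi φ) {s t A L : ℝ} (ht : 0 < t) (htA : t ≤ A)
    (hs : 0 ≤ s) (hst : s ≤ t) (hsL : s ≤ L) (hLA : L ≤ A) :
    t * φ (s / t) ≤ A * φ (L / A) := by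
  have hA : 0 < A := lt_of_lt_of_le ht htA
  have hx : 0 ≤ s / t := div_nonneg hs ht.le
  have hx1 : s / t ≤ 1 := (div_le_one ht).2 hst
  have hl : 0 ≤ t / A := div_nonneg ht.le hA.le
  have hl1 : t / A ≤ 1 := (div_le_one hA).2 htA
  have h1 : (t / A) * φ (s / t) ≤ φ ((t / A) * (s / t)) := phi_superlin hφ hx hx1 hl hl1
  have he : (t / A) * (s / t) = s / A := by
    field_simp
  rw [he] at h1
  have h2 : φ (s / A) ≤ φ (L / A) :=
    phi_mono' hφ (div_nonneg hs hA.le) (by gcongr) ((div_le_one hA).2 hLA)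
  have he2 : t * φ (s / t) = A * (t / A * φ (s / t)) := by
    field_simp
  rw [he2]
  have h3 : t / A * φ (s / t) ≤ φ (L / A) := le_trans h1 h2
  exact mul_le_mul_of_nonneg_left h3 hA.le

lemma psi_nonneg (hψ : IsPsi ψ) {t : ℝ} (ht : 0 ≤ t) : 0 ≤ ψ t := by
  have := hψ.mono (Set.self_mem_Ici) (Set.mem_Ici.2 ht) ht
  simpa [hψ.zero] using this

lemma ofReal_limZero_eq_zero (hφ : IsPhi φ)
    (hφ0 : Tendsto φ (𝓝[>] 0) (𝓝 0)) : ENNReal.ofReal (limZero φ) = 0 := by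
  rw [ENNReal.ofReal_eq_zero]
  by_contra h
  push_neg at h
  have hev : ∀ᶠ t in 𝓝[>] (0:ℝ), φ t < limZero φ := by
    have := hφ0.eventually (eventually_lt_nhds h)
    simpa using this
  have hev2 : ∀ᶠ t in 𝓝[>] (0:ℝ), t ∈ Set.Ioc (0:ℝ) 1 := by
    filter_upwards [eventually_mem_nhdsWithin,
      eventually_nhdsWithin_of_eventually_nhds (eventually_le_nhds (by norm_num : (0:ℝ) < 1))]
      with t ht ht1
    exact ⟨ht, ht1⟩
  obtain ⟨t, ht1, ht2⟩ := (hev.and hev2).exists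
  have : limZero φ ≤ φ t := csInf_le ⟨0, by
    rintro y ⟨u, hu, rfl⟩
    exact phi_nonneg hφ hu.1.le hu.2⟩ ⟨t, ht2, rfl⟩
  linarith

/-- Upper Fatou-type bound: the integral of `deriv φ` over `(0,b]` is at most `φ(2b)`. -/
lemma lintegral_deriv_le (hφ : IsPhi φ) {b : ℝ} (hb : 0 < b) (hb4 : b ≤ 1/4) :
    ∫⁻ s in Set.Ioc (0:ℝ) b, ENNReal.ofReal (deriv φ s) ≤ ENNReal.ofReal (φ (2*b)) := by
  classical
  set φt : ℝ → ℝ := fun y => φ (max 0 (min 1 y)) with hφt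
  have hclamp : ∀ y : ℝ, max 0 (min 1 y) ∈ Set.Icc (0:ℝ) 1 := fun y =>
    ⟨le_max_left _ _, max_le (by norm_num) (min_le_left _ _)⟩
  have hmono : Monotone φt := fun u v huv =>
    hφ.mono (hclamp u) (hclamp v) (max_le_max le_rfl (min_le_min le_rfl huv))
  have heq : ∀ y : ℝ, 0 ≤ y → y ≤ 1 → φt y = φ y := fun y h1 h2 => by
    simp only [hφt, min_eq_right h2, max_eq_right h1]
  have hnn : ∀ y, 0 ≤ φt y := fun y => phi_nonneg hφ (hclamp y).1 (hclamp y).2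
  have hle1 : ∀ y, φt y ≤ φ 1 :=
    fun y => hφ.mono (hclamp y) ⟨zero_le_one, le_rfl⟩ (hclamp y).2
  set h : ℕ → ℝ := fun n => 1 / ((n : ℝ) + 2) with hh
  have hpos : ∀ n, 0 < h n := fun n => by positivity
  have hhalf : ∀ n, h n ≤ 1/2 := fun n =>
    one_div_le_one_div_of_le (by norm_num) (by push_cast; linarith [Nat.cast_nonneg (α := ℝ) n])
  have h0 : Tendsto h atTop (𝓝 0) := by
    have h1 : Tendsto (fun n : ℕ => ((n : ℝ) + 2)) atTop atTop :=
      tendsto_atTop_add_const_right _ 2 tendsto_natCast_atTop_atTop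
    simpa [hh, one_div, Pi.inv_def] using h1.inv_tendsto_atTop
  set F : ℕ → ℝ → ℝ≥0∞ := fun n s => ENNReal.ofReal ((φt (s + h n) - φt s) / h n) with hF
  have hFmeas : ∀ n, Measurable (F n) := fun n =>
    ENNReal.measurable_ofReal.comp
      (((hmono.measurable.comp (measurable_add_const (h n))).sub hmono.measurable).div_const _)
  have stepA : ∀ s ∈ Set.Ioc (0:ℝ) b,
      ENNReal.ofReal (deriv φ s) ≤ Filter.liminf (fun n => F n s) atTop := by
    intro s hs
    by_cases hd : DifferentiableAt ℝ φ s
    · have hds := hd.hasDerivAt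
      rw [hasDerivAt_iff_tendsto_slope] at hds
      have hseq : Tendsto (fun n => s + h n) atTop (𝓝[≠] s) := by
        rw [tendsto_nhdsWithin_iff]
        constructor
        · have : Tendsto (fun n => s + h n) atTop (𝓝 (s + 0)) :=
            tendsto_const_nhds.add h0
          simpa using this
        · exact Eventually.of_forall fun n => by
            simp only [Set.mem_compl_iff, Set.mem_singleton_iff]
            exact ne_of_gt (by linarith [hpos n])
      have hslope : Tendsto (fun n => slope φ s (s + h n)) atTop (𝓝 (deriv φ s)) :=
        hds.comp hseq
      have hsl_eq : (fun n => slope φ s (s + h n)) = fun n => (φt (s + h n) - φt s) / h n := by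
        funext n
        rw [slope_def_field]
        have e1 : φt (s + h n) = φ (s + h n) :=
          heq _ (by linarith [hs.1, (hpos n).le]) (by linarith [hs.2, hhalf n])
        have e2 : φt s = φ s := heq _ hs.1.le (by linarith [hs.2])
        rw [e1, e2]
        congr 1
        ring
      rw [hsl_eq] at hslope
      have hT : Tendsto (fun n => F n s) atTop (𝓝 (ENNReal.ofReal (deriv φ s))) :=
        (ENNReal.continuous_ofReal.tendsto _).comp hslope
      exact le_of_eq hT.liminf_eq.symm
    · rw [deriv_zero_of_not_differentiableAt hd]
      simp
  have stepC : ∀ n, h n ≤ b → ∫⁻ s in Set.Ioc (0:ℝ) b, F n s ≤ ENNReal.ofReal (φ (2*b)) := by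
    intro n hnb
    set c := h n with hc
    have hc0 : 0 < c := hpos n
    set G : ℝ → ℝ := fun s => (φt (s + c) - φt s) / c with hG
    have hGnn : ∀ s, 0 ≤ G s := fun s =>
      div_nonneg (by linarith [hmono (le_add_of_nonneg_right hc0.le : s ≤ s + c)]) hc0.le
    have hGbd : ∀ s, G s ≤ φ 1 / c := fun s => by
      have h1 : φt (s + c) - φt s ≤ φ 1 := by linarith [hle1 (s + c), hnn s]
      exact div_le_div_of_nonneg_right h1 hc0.le |>.trans le_rfl
    have hGm : Measurable G :=
      ((hmono.measurable.comp (measurable_add_const c)).sub hmono.measurable).div_const _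
    have hGi : IntegrableOn G (Set.Ioc 0 b) := by
      refine Integrable.mono' (g := fun _ => φ 1 / c) ?_ hGm.aestronglyMeasurable ?_
      · exact integrableOn_const (by simp [Real.volume_Ioc])
      · exact ae_of_all _ fun s => by
          rw [Real.norm_eq_abs, abs_of_nonneg (hGnn s)]; exact hGbd s
    have hlin : ∫⁻ s in Set.Ioc (0:ℝ) b, F n s
        = ENNReal.ofReal (∫ s in Set.Ioc (0:ℝ) b, G s) :=
      (ofReal_integral_eq_lintegral_ofReal hGi (ae_of_all _ hGnn)).symm
    rw [hlin]
    apply ENNReal.ofReal_le_ofReal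
    have hint : ∫ s in Set.Ioc (0:ℝ) b, G s = ∫ s in (0:ℝ)..b, G s :=
      (intervalIntegral.integral_of_le hb.le).symm
    rw [hint]
    have hiφ : ∀ u v : ℝ, IntervalIntegrable φt volume u v :=
      fun u v => hmono.intervalIntegrable
    have hiφc : ∀ u v : ℝ, IntervalIntegrable (fun x => φt (x + c)) volume u v :=
      fun u v => (hmono.comp (monotone_id.add_const c)).intervalIntegrable
    have e0 : ∫ s in (0:ℝ)..b, G s = (∫ s in (0:ℝ)..b, (φt (s + c) - φt s)) / c := by
      rw [hG]
      exact intervalIntegral.integral_div c _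
    have e1 : ∫ s in (0:ℝ)..b, (φt (s + c) - φt s)
        = (∫ s in (0:ℝ)..b, φt (s + c)) - ∫ s in (0:ℝ)..b, φt s :=
      intervalIntegral.integral_sub (hiφc 0 b) (hiφ 0 b)
    have e2 : ∫ s in (0:ℝ)..b, φt (s + c) = ∫ s in c..(b+c), φt s := by
      have h := intervalIntegral.integral_comp_add_right (a := (0:ℝ)) (b := b) φt c
      rw [h]
      norm_num
    have e3 : (∫ s in c..b, φt s) + ∫ s in b..(b+c), φt s = ∫ s in c..(b+c), φt s :=
      intervalIntegral.integral_add_adjacent_intervals (hiφ c b) (hiφ b (b+c))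
    have e4 : (∫ s in (0:ℝ)..c, φt s) + ∫ s in c..b, φt s = ∫ s in (0:ℝ)..b, φt s :=
      intervalIntegral.integral_add_adjacent_intervals (hiφ 0 c) (hiφ c b)
    have e5 : ∫ s in b..(b+c), φt s ≤ c * φt (b + c) := by
      have hcmp : ∫ s in b..(b+c), φt s ≤ ∫ _ in b..(b+c), φt (b + c) :=
        intervalIntegral.integral_mono_on (by linarith) (hiφ b (b+c))
          intervalIntegrable_const (fun x hx => hmono hx.2)
      simpa [smul_eq_mul, mul_comm] using hcmp
    have e6 : 0 ≤ ∫ s in (0:ℝ)..c, φt s :=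
      intervalIntegral.integral_nonneg hc0.le (fun x _ => hnn x)
    have e7 : φt (b + c) = φ (b + c) := heq _ (by linarith) (by linarith)
    have e8 : φ (b + c) ≤ φ (2 * b) :=
      phi_mono' hφ (by linarith) (by linarith) (by linarith)
    calc ∫ s in (0:ℝ)..b, G s
        = ((∫ s in c..(b+c), φt s) - ∫ s in (0:ℝ)..b, φt s) / c := by rw [e0, e1, e2]
      _ = ((∫ s in b..(b+c), φt s) - ∫ s in (0:ℝ)..c, φt s) / c := by
          rw [← e3, ← e4]; ring_nf
      _ ≤ (c * φt (b + c)) / c := by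
          apply div_le_div_of_nonneg_right _ hc0.le |>.trans le_rfl
          linarith
      _ = φt (b + c) := by field_simp
      _ ≤ φ (2 * b) := by rw [e7]; exact e8
  have hev : ∀ᶠ n in atTop, ∫⁻ s in Set.Ioc (0:ℝ) b, F n s ≤ ENNReal.ofReal (φ (2*b)) := by
    filter_upwards [h0.eventually (eventually_le_nhds hb)] with n hn
    exact stepC n hn
  calc ∫⁻ s in Set.Ioc (0:ℝ) b, ENNReal.ofReal (deriv φ s)
      ≤ ∫⁻ s in Set.Ioc (0:ℝ) b, Filter.liminf (fun n => F n s) atTop := by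
        apply lintegral_mono_ae
        rw [ae_restrict_iff' measurableSet_Ioc]
        exact ae_of_all _ stepA
    _ ≤ Filter.liminf (fun n => ∫⁻ s in Set.Ioc (0:ℝ) b, F n s) atTop :=
        lintegral_liminf_le hFmeas
    _ ≤ ENNReal.ofReal (φ (2*b)) := by
        calc Filter.liminf (fun n => ∫⁻ s in Set.Ioc (0:ℝ) b, F n s) atTop
            ≤ Filter.liminf (fun _ : ℕ => ENNReal.ofReal (φ (2*b))) atTop :=
              Filter.liminf_le_liminf hev
          _ = ENNReal.ofReal (φ (2*b)) := Filter.liminf_const _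

/-- Construction of rapidly separated scales. -/
lemma exists_scales (hφ : IsPhi φ)
    (hφslope : Tendsto (fun t => φ t / t) (𝓝[>] 0) atTop)
    {θ e : ℝ} (hθ : 1 ≤ θ) (he : 0 < e) (he1 : e ≤ 1) :
    ∃ m : ℕ → ℝ, (∀ k, 0 < m k ∧ m k ≤ e) ∧ (∀ k, m (k + 1) ≤ m k / 2) ∧
      (∀ k, θ * (m (k + 1) / φ (m (k + 1))) ≤ m k / φ (m k)) := by
  have hstep : ∀ x : ℝ, 0 < x → x ≤ e →
      ∃ y : ℝ, (0 < y ∧ y ≤ e) ∧ y ≤ x / 2 ∧ θ * (y / φ y) ≤ x / φ x := by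
    intro x hx hxe
    have hφx : 0 < φ x := hφ.pos x hx (le_trans hxe he1)
    have hev1 : ∀ᶠ y in 𝓝[>] (0:ℝ), θ * (φ x / x) ≤ φ y / y :=
      hφslope.eventually_ge_atTop _
    have hev2 : ∀ᶠ y in 𝓝[>] (0:ℝ), y ≤ x / 2 :=
      eventually_nhdsWithin_of_eventually_nhds (eventually_le_nhds (by positivity))
    have hev3 : ∀ᶠ y in 𝓝[>] (0:ℝ), 0 < y := eventually_mem_nhdsWithin
    obtain ⟨y, h1, h2, h3⟩ := (hev1.and (hev2.and hev3)).exists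
    have hye : y ≤ e := by linarith
    have hφy : 0 < φ y := hφ.pos y h3 (by linarith)
    refine ⟨y, ⟨h3, hye⟩, h2, ?_⟩
    have h1' : θ * φ x * y ≤ φ y * x := by
      have hxy : (0:ℝ) < x * y := by positivity
      have hmul := mul_le_mul_of_nonneg_right h1 hxy.le
      have e1 : θ * (φ x / x) * (x * y) = θ * φ x * y := by field_simp
      have e2 : φ y / y * (x * y) = φ y * x := by field_simp
      rw [e1, e2] at hmul
      exact hmul
    rw [mul_div_assoc', div_le_div_iff₀ (by positivity) hφx]
    nlinarith [h1']
  have hmk : ∀ x : ℝ, ∃ y : ℝ, (0 < x ∧ x ≤ e) →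
      ((0 < y ∧ y ≤ e) ∧ y ≤ x / 2 ∧ θ * (y / φ y) ≤ x / φ x) := by
    intro x
    by_cases hx : 0 < x ∧ x ≤ e
    · obtain ⟨y, hy⟩ := hstep x hx.1 hx.2
      exact ⟨y, fun _ => hy⟩
    · exact ⟨e, fun hx' => absurd hx' hx⟩
  choose next hnext using hmk
  set m : ℕ → ℝ := fun k => Nat.rec e (fun _ prev => next prev) k with hm
  have hmsucc : ∀ k, m (k + 1) = next (m k) := fun k => rfl
  have hinv : ∀ k, 0 < m k ∧ m k ≤ e := by
    intro k
    induction k with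
    | zero => exact ⟨he, le_rfl⟩
    | succ k ih =>
        rw [hmsucc k]
        exact (hnext (m k) ih).1
  refine ⟨m, hinv, fun k => ?_, fun k => ?_⟩
  · rw [hmsucc k]; exact (hnext (m k) (hinv k)).2.1
  · rw [hmsucc k]; exact (hnext (m k) (hinv k)).2.2

/-- The combinatorial lower bound for the total cost. -/
lemma comb (hψ : IsPsi ψ) {M N : ℕ} (hM : 2 ≤ M) (hN : N = M ^ 2)
    {Q : ℝ} (hQ : 4 * (N:ℝ)^2 * ψ M / ψ 1 ≤ Q)
    (α : ℕ → ℕ → ℝ≥0∞) (cost : ℕ → ℝ≥0∞)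
    (h1 : ∀ k, k < N → 1 ≤ ∑' n, α n k)
    (h2 : ∀ n k, k < N → α n k ≤ 1)
    (h3 : ∀ n k, k < N → M ≤ n → α n k * ENNReal.ofReal (ψ M / N) ≤ cost n)
    (h4 : ∀ n j k, j < N → k < N → j ≠ k →
      min (α n j) (α n k) * ENNReal.ofReal (ψ 1 * Q / N) ≤ cost n) :
    ENNReal.ofReal (ψ M / 8) ≤ ∑' n, cost n := by
  classical
  have hψ1 : 0 < ψ 1 := hψ.pos 1 one_pos
  have hMr : (0:ℝ) < M := by positivity
  have hψM : 0 < ψ (M:ℝ) := hψ.pos _ hMr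
  have hN0 : 0 < N := by
    have : 4 ≤ N := by subst hN; nlinarith [hM]
    omega
  have hNr : (0:ℝ) < N := by exact_mod_cast hN0
  have hQ0 : 0 < Q := lt_of_lt_of_le (by positivity) hQ
  set cY : ℝ≥0∞ := ENNReal.ofReal (ψ M / N) with hcY
  set X : ℝ≥0∞ := ENNReal.ofReal (ψ 1 * Q / N) with hX
  have hcY0 : cY ≠ 0 := by
    simp only [hcY, ne_eq, ENNReal.ofReal_eq_zero, not_le]
    positivity
  have hcYtop : cY ≠ ⊤ := ENNReal.ofReal_ne_top
  have hX0 : X ≠ 0 := by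
    simp only [hX, ne_eq, ENNReal.ofReal_eq_zero, not_le]
    positivity
  have hXtop : X ≠ ⊤ := ENNReal.ofReal_ne_top
  have hper : ∀ n, (∑ k ∈ Finset.range N, α n k) ≤
      (if n < M then 1 else 0) + (cost n / cY + (N : ℝ≥0∞) * (cost n / X)) := by
    intro n
    obtain ⟨k0, hk0, hmax⟩ := Finset.exists_max_image (Finset.range N) (α n)
      ⟨0, Finset.mem_range.2 hN0⟩
    have hk0N : k0 < N := Finset.mem_range.1 hk0
    have hsplit : ∑ k ∈ Finset.range N, α n k
        = α n k0 + ∑ k ∈ (Finset.range N).erase k0, α n k :=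
      (Finset.add_sum_erase _ _ hk0).symm
    have hother : ∀ k ∈ (Finset.range N).erase k0, α n k ≤ cost n / X := by
      intro k hk
      obtain ⟨hne, hkN⟩ := Finset.mem_erase.1 hk
      have hmin : min (α n k) (α n k0) = α n k :=
        min_eq_left (hmax k hkN)
      have h := h4 n k k0 (Finset.mem_range.1 hkN) hk0N hne
      rw [hmin] at h
      exact (ENNReal.le_div_iff_mul_le (Or.inl hX0) (Or.inl hXtop)).2 h
    have hothersum : ∑ k ∈ (Finset.range N).erase k0, α n k ≤ (N : ℝ≥0∞) * (cost n / X) := by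
      calc ∑ k ∈ (Finset.range N).erase k0, α n k
          ≤ ∑ _k ∈ (Finset.range N).erase k0, (cost n / X) := Finset.sum_le_sum hother
        _ = ((Finset.range N).erase k0).card • (cost n / X) := by
            rw [Finset.sum_const]
        _ ≤ (N : ℝ≥0∞) * (cost n / X) := by
            rw [nsmul_eq_mul]
            apply mul_le_mul_left
            have hcard : ((Finset.range N).erase k0).card ≤ N :=
              le_trans Finset.card_erase_le (by simp)
            exact_mod_cast hcard
    by_cases hn : n < M
    · simp only [hn, if_true]
      rw [hsplit]
      refine add_le_add (h2 n k0 hk0N) (le_trans hothersum ?_)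
      exact le_add_self
    · simp only [hn, if_false]
      rw [hsplit, zero_add]
      refine add_le_add ?_ hothersum
      have h := h3 n k0 hk0N (Nat.le_of_not_lt hn)
      exact (ENNReal.le_div_iff_mul_le (Or.inl hcY0) (Or.inl hcYtop)).2 h
  set P := ∑' n, cost n with hP
  have step1 : (N : ℝ≥0∞) ≤ ∑' n, ∑ k ∈ Finset.range N, α n k := by
    have hNs : (N : ℝ≥0∞) = ∑ _k ∈ Finset.range N, (1:ℝ≥0∞) := by simp
    rw [hNs]
    calc ∑ _k ∈ Finset.range N, (1:ℝ≥0∞)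
        ≤ ∑ k ∈ Finset.range N, ∑' n, α n k :=
          Finset.sum_le_sum (fun k hk => h1 k (Finset.mem_range.1 hk))
      _ = ∑' n, ∑ k ∈ Finset.range N, α n k :=
          (Summable.tsum_finsetSum (fun k _ => ENNReal.summable)).symm
  have step2 : (N : ℝ≥0∞) ≤ (M : ℝ≥0∞) + (P / cY + (N : ℝ≥0∞) * (P / X)) := by
    refine step1.trans ?_
    calc ∑' n, ∑ k ∈ Finset.range N, α n k
        ≤ ∑' n, ((if n < M then (1:ℝ≥0∞) else 0) + (cost n / cY + (N:ℝ≥0∞) * (cost n / X))) :=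
          ENNReal.tsum_le_tsum hper
      _ = (∑' n, (if n < M then (1:ℝ≥0∞) else 0))
          + ∑' n, (cost n / cY + (N:ℝ≥0∞) * (cost n / X)) := ENNReal.tsum_add
      _ = (M : ℝ≥0∞) + (P / cY + (N : ℝ≥0∞) * (P / X)) := by
          congr 1
          · rw [tsum_eq_sum (s := Finset.range M)
              (fun n hn => if_neg (fun h => hn (Finset.mem_range.2 h)))]
            calc ∑ n ∈ Finset.range M, (if n < M then (1:ℝ≥0∞) else 0)
                = ∑ _n ∈ Finset.range M, (1:ℝ≥0∞) :=
                  Finset.sum_congr rfl (fun n hn => if_pos (Finset.mem_range.1 hn))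
              _ = (M : ℝ≥0∞) := by simp
          · rw [ENNReal.tsum_add]
            congr 1
            · simp only [div_eq_mul_inv]
              exact ENNReal.tsum_mul_right
            · rw [ENNReal.tsum_mul_left]
              congr 1
              simp only [div_eq_mul_inv]
              exact ENNReal.tsum_mul_right
  by_contra hcon
  push_neg at hcon
  have hPle : P ≤ ENNReal.ofReal (ψ M / 8) := hcon.le
  have hbound1 : P / cY ≤ ENNReal.ofReal ((N:ℝ) / 8) := by
    rw [ENNReal.div_le_iff hcY0 hcYtop]
    calc P ≤ ENNReal.ofReal (ψ M / 8) := hPle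
      _ = ENNReal.ofReal ((N:ℝ)/8 * (ψ M / N)) := by
          congr 1
          field_simp
      _ = ENNReal.ofReal ((N:ℝ)/8) * cY := by
          rw [hcY, ← ENNReal.ofReal_mul (by positivity)]
  have hbound2 : (N:ℝ≥0∞) * (P / X) ≤ ENNReal.ofReal (1/32 : ℝ) := by
    have hdiv : P / X ≤ ENNReal.ofReal (ψ M / 8 * (N / (ψ 1 * Q))) := by
      rw [ENNReal.div_le_iff hX0 hXtop]
      calc P ≤ ENNReal.ofReal (ψ M / 8) := hPle
        _ = ENNReal.ofReal ((ψ M / 8 * (N / (ψ 1 * Q))) * (ψ 1 * Q / N)) := by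
            congr 1
            field_simp
        _ = ENNReal.ofReal (ψ M / 8 * (N / (ψ 1 * Q))) * X := by
            rw [hX, ← ENNReal.ofReal_mul (by positivity)]
    calc (N:ℝ≥0∞) * (P / X)
        ≤ (N:ℝ≥0∞) * ENNReal.ofReal (ψ M / 8 * (N / (ψ 1 * Q))) :=
          mul_le_mul_right hdiv _
      _ = ENNReal.ofReal ((N:ℝ) * (ψ M / 8 * (N / (ψ 1 * Q)))) := by
          rw [← ENNReal.ofReal_natCast N, ← ENNReal.ofReal_mul (by positivity)]
      _ ≤ ENNReal.ofReal (1/32 : ℝ) := by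
          apply ENNReal.ofReal_le_ofReal
          have hq' : 4 * (N:ℝ)^2 * ψ M ≤ Q * ψ 1 := by
            rw [div_le_iff₀ hψ1] at hQ
            linarith
          have expand : (N:ℝ) * (ψ M / 8 * ((N:ℝ) / (ψ 1 * Q))) = ((N:ℝ)^2 * ψ M) / (8 * (ψ 1 * Q)) := by
            field_simp
          rw [expand, div_le_div_iff₀ (by positivity) (by norm_num)]
          nlinarith [hq', hψ1, hQ0]
  have hfin : (N : ℝ≥0∞) ≤ ENNReal.ofReal ((M:ℝ) + ((N:ℝ)/8 + 1/32)) := by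
    calc (N : ℝ≥0∞) ≤ (M : ℝ≥0∞) + (P / cY + (N : ℝ≥0∞) * (P / X)) := step2
      _ ≤ (M : ℝ≥0∞) + (ENNReal.ofReal ((N:ℝ)/8) + ENNReal.ofReal (1/32 : ℝ)) := by
          gcongr
      _ = ENNReal.ofReal ((M:ℝ) + ((N:ℝ)/8 + 1/32)) := by
          rw [← ENNReal.ofReal_natCast M, ← ENNReal.ofReal_add (by positivity) (by positivity),
            ← ENNReal.ofReal_add (by positivity) (by positivity)]
  rw [← ENNReal.ofReal_natCast N, ENNReal.ofReal_le_ofReal_iff (by positivity)] at hfin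
  have hNM : (N:ℝ) = (M:ℝ)^2 := by exact_mod_cast congrArg (Nat.cast : ℕ → ℝ) hN
  have hM2 : (2:ℝ) ≤ M := by exact_mod_cast hM
  nlinarith [hfin, hM2, hNM]

set_option maxHeartbeats 1600000 in
/-- Main estimate: the upper equivalence bound forces `ψ(M) ≤ 32 K₂` for every `M ≥ 2`. -/
lemma main_bound (hφ : IsPhi φ) (hψ : IsPsi ψ)
    (hφ0 : Tendsto φ (𝓝[>] 0) (𝓝 0))
    (hφslope : Tendsto (fun t => φ t / t) (𝓝[>] 0) atTop)
    {c p : ℝ} (hc : 0 < c) (hc1 : c < 1) (hp : 0 < p) (hp1 : p ≤ 1)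
    (hreg : MonotoneOn (fun t => φ t / t ^ c) (Set.Ioc 0 p))
    {K2 : ℝ} (hK2 : 0 < K2)
    (hupper : ∀ f : ℝ → ℝ, AEMeasurable f μ01 →
      QANorm φ ψ f ≤ ENNReal.ofReal K2 * lorentzNorm φ f)
    (M : ℕ) (hM : 2 ≤ M) : ψ (M:ℝ) ≤ 32 * K2 := by
  classical
  set N : ℕ := M ^ 2 with hNdef
  have hN4 : 4 ≤ N := by
    rw [hNdef]
    calc 4 = 2^2 := rfl
      _ ≤ M^2 := Nat.pow_le_pow_left hM 2
  have hN0 : 0 < N := by omega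
  have hNr : (0:ℝ) < N := by exact_mod_cast hN0
  have hMr : (0:ℝ) < M := by positivity
  have hψ1 : 0 < ψ 1 := hψ.pos 1 one_pos
  have hψM : 0 < ψ (M:ℝ) := hψ.pos _ hMr
  set Q : ℝ := max (4 * (N:ℝ)^2 * ψ (M:ℝ) / ψ 1) 1 with hQdef
  have hQ1 : 1 ≤ Q := le_max_right _ _
  have hQ0 : 0 < Q := lt_of_lt_of_le one_pos hQ1
  have hQle : 4 * (N:ℝ)^2 * ψ (M:ℝ) / ψ 1 ≤ Q := le_max_left _ _
  set K : ℕ := ⌈1/c⌉₊ with hKdef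
  set θ : ℝ := Q ^ K with hθdef
  have hθ1 : 1 ≤ θ := one_le_pow₀ hQ1
  set e : ℝ := min p (1/8) with hedef
  have he : 0 < e := lt_min hp (by norm_num)
  have he1 : e ≤ 1 := le_trans (min_le_right _ _) (by norm_num)
  have hep : e ≤ p := min_le_left _ _
  have he8 : e ≤ 1/8 := min_le_right _ _
  obtain ⟨m, hm1, hm2, hm3⟩ := exists_scales hφ hφslope hθ1 he he1
  have hmpos : ∀ k, 0 < m k := fun k => (hm1 k).1
  have hmle : ∀ k, m k ≤ 1/8 := fun k => le_trans (hm1 k).2 he8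
  have hmlep : ∀ k, m k ≤ p := fun k => le_trans (hm1 k).2 hep
  have hmle1 : ∀ k, m k ≤ 1 := fun k => le_trans (hmle k) (by norm_num)
  have hφm : ∀ k, 0 < φ (m k) := fun k => hφ.pos _ (hmpos k) (hmle1 k)
  have hmanti : ∀ j k : ℕ, j ≤ k → m k ≤ m j := fun j k hjk =>
    (antitone_nat_of_succ_le (fun l => le_trans (hm2 l) (by linarith [hmpos l]))) hjk
  have hgeo : ∀ j d : ℕ, m (j + d) ≤ m j * (1/2) ^ d := by
    intro j d
    induction d with
    | zero => simp
    | succ d ih =>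
        have h1 : m (j + (d+1)) ≤ m (j + d) / 2 := hm2 (j + d)
        calc m (j + (d+1)) ≤ m (j + d) / 2 := h1
          _ ≤ (m j * (1/2)^d) / 2 := by linarith
          _ = m j * (1/2)^(d+1) := by ring
  have hranti : ∀ j k : ℕ, j ≤ k → m k / φ (m k) ≤ m j / φ (m j) := fun j k hjk =>
    (antitone_nat_of_succ_le (f := fun i => m i / φ (m i)) (fun l => by
      have h1 := hm3 l
      have h2 : 0 < m (l+1) / φ (m (l+1)) := div_pos (hmpos _) (hφm _)
      have h3 : m (l+1) / φ (m (l+1)) ≤ θ * (m (l+1) / φ (m (l+1))) :=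
        le_mul_of_one_le_left h2.le hθ1
      exact h3.trans h1) : Antitone fun i => m i / φ (m i)) hjk
  have hrsep : ∀ j k : ℕ, j < k → θ * (m k / φ (m k)) ≤ m j / φ (m j) := by
    intro j k hjk
    have h1 : m k / φ (m k) ≤ m (j+1) / φ (m (j+1)) := hranti (j+1) k hjk
    have h2 := hm3 j
    have h3 : θ * (m k / φ (m k)) ≤ θ * (m (j+1) / φ (m (j+1))) :=
      mul_le_mul_of_nonneg_left h1 (by linarith)
    linarith
  -- the pairwise regularity estimate
  have hC8 : ∀ j k : ℕ, j < k → Q * φ (m k) ≤ φ (m j * (φ (m k) / φ (m j))) := by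
    intro j k hjk
    set T : ℝ := m j * (φ (m k) / φ (m j)) with hTdef
    have hratio_pos : 0 < φ (m k) / φ (m j) := div_pos (hφm k) (hφm j)
    have hT_pos : 0 < T := mul_pos (hmpos j) hratio_pos
    have hφle : φ (m k) ≤ φ (m j) := phi_mono' hφ (hmpos k).le (hmanti j k hjk.le) (hmle1 j)
    have hT_le : T ≤ m j := by
      have : φ (m k) / φ (m j) ≤ 1 := (div_le_one (hφm j)).2 hφle
      nlinarith [hmpos j]
    have hT_lep : T ≤ p := le_trans hT_le (hmlep j)
    have ht0T : m k ≤ T := by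
      have h1 : m k / φ (m k) ≤ m j / φ (m j) := hranti j k hjk.le
      rw [div_le_div_iff₀ (hφm k) (hφm j)] at h1
      show m k ≤ m j * (φ (m k) / φ (m j))
      rw [← mul_div_assoc, le_div_iff₀ (hφm j)]
      linarith [h1]
    have hregapp : φ (m k) / (m k) ^ c ≤ φ T / T ^ c :=
      hreg ⟨hmpos k, hmlep k⟩ ⟨hT_pos, hT_lep⟩ ht0T
    have hrpow_pos : (0:ℝ) < (m k) ^ c := Real.rpow_pos_of_pos (hmpos k) c
    have hrpow_posT : (0:ℝ) < T ^ c := Real.rpow_pos_of_pos hT_pos c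
    rw [div_le_div_iff₀ hrpow_pos hrpow_posT] at hregapp
    -- φ (m k) * T^c ≤ φ T * (m k)^c, so φ T ≥ φ (m k) * (T/m k)^c
    have hTratio : θ ≤ T / m k := by
      have h1 := hrsep j k hjk
      rw [le_div_iff₀ (hmpos k)]
      have h2 : θ * (m k / φ (m k)) * φ (m k) ≤ (m j / φ (m j)) * φ (m k) :=
        mul_le_mul_of_nonneg_right h1 (hφm k).le
      have h3 : θ * (m k / φ (m k)) * φ (m k) = θ * m k := by
        rw [mul_assoc, div_mul_cancel₀ _ (hφm k).ne']
      have h4 : (m j / φ (m j)) * φ (m k) = m j * (φ (m k) / φ (m j)) := by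
        rw [div_mul_eq_mul_div, mul_div_assoc]
      show θ * m k ≤ m j * (φ (m k) / φ (m j))
      rw [← h3, ← h4]
      exact h2
    have hQθc : Q ≤ θ ^ c := by
      rw [hθdef, ← Real.rpow_natCast Q K, ← Real.rpow_mul hQ0.le]
      have hKc : 1 ≤ (K:ℝ) * c := by
        have h1 : 1/c ≤ (K:ℝ) := Nat.le_ceil _
        calc (1:ℝ) = (1/c) * c := by field_simp
          _ ≤ (K:ℝ) * c := mul_le_mul_of_nonneg_right h1 hc.le
      calc Q = Q ^ (1:ℝ) := (Real.rpow_one Q).symm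
        _ ≤ Q ^ ((K:ℝ) * c) := Real.rpow_le_rpow_of_exponent_le hQ1 hKc
    have hθT : θ ^ c ≤ (T / m k) ^ c :=
      Real.rpow_le_rpow (by linarith) hTratio hc.le
    have hTm : (T / m k) ^ c = T ^ c / (m k) ^ c :=
      Real.div_rpow hT_pos.le (hmpos k).le c
    -- combine
    have h7 : Q ≤ T ^ c / (m k) ^ c := by
      rw [← hTm]
      exact le_trans hQθc hθT
    have h8 : Q * φ (m k) * (m k) ^ c ≤ φ T * (m k) ^ c := by
      have h9 : Q * (m k) ^ c ≤ T ^ c := (le_div_iff₀ hrpow_pos).1 h7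
      calc Q * φ (m k) * (m k) ^ c = φ (m k) * (Q * (m k)^c) := by ring
        _ ≤ φ (m k) * T ^ c := mul_le_mul_of_nonneg_left h9 (hφm k).le
        _ = φ (m k) * T ^ c * 1 := by ring
        _ ≤ φ T * (m k) ^ c := by nlinarith [hregapp]
    exact (mul_le_mul_iff_of_pos_right hrpow_pos).1 h8
  -- weights
  set bV : ℕ → ℝ := fun k => 1 / ((N:ℝ) * φ (m k)) with hbVdef
  have hb_pos : ∀ k, 0 < bV k := fun k => by
    show (0:ℝ) < 1 / ((N:ℝ) * φ (m k))
    exact one_div_pos.2 (mul_pos hNr (hφm k))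
  have hbφ : ∀ k, bV k * φ (m k) = 1 / N := fun k => by
    show 1 / ((N:ℝ) * φ (m k)) * φ (m k) = 1 / (N:ℝ)
    rw [div_mul_eq_mul_div, one_mul, mul_comm (N:ℝ) (φ (m k)), ← div_div,
      div_self (hφm k).ne']
  have hb_mono : ∀ j k : ℕ, j ≤ k → bV j ≤ bV k := by
    intro j k hjk
    show 1 / ((N:ℝ) * φ (m j)) ≤ 1 / ((N:ℝ) * φ (m k))
    have hφle : φ (m k) ≤ φ (m j) := phi_mono' hφ (hmpos k).le (hmanti j k hjk) (hmle1 j)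
    apply one_div_le_one_div_of_le
    · exact mul_pos hNr (hφm k)
    · nlinarith [hNr, hφle]
  -- positions
  set xV : ℕ → ℝ := fun k => ∑ i ∈ Finset.range k, m i with hxVdef
  have hx_succ : ∀ k, xV (k+1) = xV k + m k := fun k => Finset.sum_range_succ _ _
  have hx_nonneg : ∀ k, 0 ≤ xV k := fun k => Finset.sum_nonneg (fun i _ => (hmpos i).le)
  have hx_mono : ∀ j k : ℕ, j ≤ k → xV j ≤ xV k := fun j k hjk =>
    Finset.sum_le_sum_of_subset_of_nonneg (Finset.range_subset_range.2 hjk)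
      (fun i _ _ => (hmpos i).le)
  have hsum_le : ∀ j n : ℕ, ∑ i ∈ Finset.range n, m (j + i) ≤ 2 * m j := by
    intro j n
    calc ∑ i ∈ Finset.range n, m (j + i) ≤ ∑ i ∈ Finset.range n, m j * (1/2)^i :=
        Finset.sum_le_sum (fun i _ => hgeo j i)
      _ = m j * ∑ i ∈ Finset.range n, (1/2)^i := by rw [Finset.mul_sum]
      _ ≤ m j * 2 := by
          have := sum_geometric_two_le n
          nlinarith [hmpos j, this]
      _ = 2 * m j := by ring
  have hxN_le : xV N ≤ 1/4 := by
    have h1 : xV N = ∑ i ∈ Finset.range N, m (0 + i) := by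
      rw [hxVdef]
      simp
    rw [h1]
    calc ∑ i ∈ Finset.range N, m (0 + i) ≤ 2 * m 0 := hsum_le 0 N
      _ ≤ 1/4 := by linarith [hmle 0]
  -- tails
  set tV : ℕ → ℝ := fun j => ∑ i ∈ Finset.Ico j N, m i with htVdef
  have htN : tV N = 0 := by
    rw [htVdef]
    simp
  have ht_succ : ∀ j, j < N → tV j = m j + tV (j+1) := by
    intro j hj
    rw [htVdef]
    exact Finset.sum_eq_sum_Ico_succ_bot hj _
  have ht_nonneg : ∀ j, 0 ≤ tV j := fun j => Finset.sum_nonneg (fun i _ => (hmpos i).le)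
  have ht_mono : ∀ j, tV (j+1) ≤ tV j := by
    intro j
    rcases lt_or_ge j N with hj | hj
    · rw [ht_succ j hj]; linarith [hmpos j]
    · rw [htVdef]
      have h1 : Finset.Ico (j+1) N = ∅ := by
        rw [Finset.Ico_eq_empty_iff]
        omega
      simp only [h1, Finset.sum_empty]
      exact ht_nonneg j
  have ht_pos : ∀ j, j < N → 0 < tV j := fun j hj => by
    rw [ht_succ j hj]
    linarith [hmpos j, ht_nonneg (j+1)]
  have ht_le : ∀ j, tV j ≤ 2 * m j := by
    intro j
    show (∑ i ∈ Finset.Ico j N, m i) ≤ 2 * m j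
    rw [Finset.sum_Ico_eq_sum_range]
    exact hsum_le j (N - j)
  have ht_le4 : ∀ j, tV j ≤ 1/4 := fun j => le_trans (ht_le j) (by linarith [hmle j])
  have ht0_eq : tV 0 = xV N := by
    simp only [htVdef, hxVdef, Finset.range_eq_Ico]
  -- the test function
  set Iset : ℕ → Set ℝ := fun k => Set.Ico (xV k) (xV k + m k) with hIdef
  have hI_sub : ∀ k, k < N → Iset k ⊆ Set.Icc 0 1 := by
    intro k hk y hy
    constructor
    · exact le_trans (hx_nonneg k) hy.1
    · have h1 : xV k + m k = xV (k+1) := (hx_succ k).symm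
      have h2 : xV (k+1) ≤ xV N := hx_mono _ _ hk
      have := hy.2
      linarith [hxN_le]
  have hμI : ∀ k, k < N → μ01 (Iset k) = ENNReal.ofReal (m k) := by
    intro k hk
    rw [μ01, Measure.restrict_apply measurableSet_Ico,
      Set.inter_eq_left.2 (hI_sub k hk), Real.volume_Ico]
    congr 1
    ring
  set f : ℝ → ℝ := fun y => ∑ k ∈ Finset.range N, (Iset k).indicator (fun _ => bV k) y
    with hfdef
  have hfmeas : Measurable f := by
    apply Finset.measurable_sum
    intro k _
    exact measurable_const.indicator measurableSet_Ico
  have hf_nonneg : ∀ y, 0 ≤ f y := by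
    intro y
    apply Finset.sum_nonneg
    intro k _
    exact Set.indicator_nonneg (fun _ _ => (hb_pos k).le) y
  have hnotmem : ∀ j k : ℕ, k < N → j ≠ k → ∀ y ∈ Iset k, y ∉ Iset j := by
    intro j k hkN hne y hy
    rcases lt_or_gt_of_ne hne with h | h
    · intro hyj
      have h1 : xV j + m j = xV (j+1) := (hx_succ j).symm
      have h2 : xV (j+1) ≤ xV k := hx_mono _ _ h
      have := hyj.2
      have := hy.1
      linarith
    · intro hyj
      have h1 : xV k + m k = xV (k+1) := (hx_succ k).symm
      have h2 : xV (k+1) ≤ xV j := hx_mono _ _ h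
      have := hy.2
      have := hyj.1
      linarith
  have hf_on : ∀ k, k < N → ∀ y ∈ Iset k, f y = bV k := by
    intro k hk y hy
    show (∑ l ∈ Finset.range N, (Iset l).indicator (fun _ => bV l) y) = bV k
    rw [Finset.sum_eq_single_of_mem k (Finset.mem_range.2 hk)]
    · exact Set.indicator_of_mem hy _
    · intro j _ hne
      exact Set.indicator_of_notMem (hnotmem j k hk hne y hy) _
  have hf_off : ∀ y, (∀ k, k < N → y ∉ Iset k) → f y = 0 := by
    intro y hy
    show (∑ l ∈ Finset.range N, (Iset l).indicator (fun _ => bV l) y) = 0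
    apply Finset.sum_eq_zero
    intro k hk
    exact Set.indicator_of_notMem (hy k (Finset.mem_range.1 hk)) _
  -- rearrangement bounds
  have hdec_nonneg : ∀ s, 0 ≤ decRearr f s :=
    fun s => Real.sInf_nonneg (fun y hy => hy.1)
  have hdec_le : ∀ (s B : ℝ), 0 ≤ B → μ01 {x | B < |f x|} ≤ ENNReal.ofReal s →
      decRearr f s ≤ B :=
    fun s B hB hμ => csInf_le ⟨0, fun y hy => hy.1⟩ ⟨hB, hμ⟩
  have hlevel : ∀ (B : ℝ), 0 ≤ B → ∀ (J : ℕ),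
      (∀ k, k < N → k < J → bV k ≤ B) →
      μ01 {x | B < |f x|} ≤ ENNReal.ofReal (tV J) := by
    intro B hB J hJ
    have hsub : {x | B < |f x|} ⊆ ⋃ k ∈ Finset.Ico J N, Iset k := by
      intro y hy
      simp only [Set.mem_setOf_eq] at hy
      by_cases hmem : ∀ k, k < N → y ∉ Iset k
      · rw [hf_off y hmem] at hy
        simp at hy
        linarith
      · push_neg at hmem
        obtain ⟨k, hkN, hyk⟩ := hmem
        have hfy : f y = bV k := hf_on k hkN y hyk
        rw [hfy, abs_of_nonneg (hb_pos k).le] at hy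
        have hJk : J ≤ k := by
          by_contra hlt
          push_neg at hlt
          exact absurd hy (not_lt.2 (hJ k hkN hlt))
        simp only [Set.mem_iUnion]
        exact ⟨k, Finset.mem_Ico.2 ⟨hJk, hkN⟩, hyk⟩
    calc μ01 {x | B < |f x|} ≤ μ01 (⋃ k ∈ Finset.Ico J N, Iset k) := measure_mono hsub
      _ ≤ ∑ k ∈ Finset.Ico J N, μ01 (Iset k) := measure_biUnion_finset_le _ _
      _ = ∑ k ∈ Finset.Ico J N, ENNReal.ofReal (m k) :=
          Finset.sum_congr rfl (fun k hk => hμI k (Finset.mem_Ico.1 hk).2)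
      _ = ENNReal.ofReal (tV J) := by
          rw [htVdef, ENNReal.ofReal_sum_of_nonneg (fun k _ => (hmpos k).le)]
  have hμlevel : ∀ j, j < N → μ01 {x | bV j < |f x|} ≤ ENNReal.ofReal (tV (j+1)) := by
    intro j hj
    apply hlevel (bV j) (hb_pos j).le (j+1)
    intro k _ hkj
    exact hb_mono k j (by omega)
  have hμlevel0 : μ01 {x | 0 < |f x|} ≤ ENNReal.ofReal (tV 0) := by
    apply hlevel 0 le_rfl 0
    intro k _ hk0
    exact absurd hk0 (by omega)
  -- Lorentz norm bound
  set G : ℝ → ℝ≥0∞ := fun s => ENNReal.ofReal (decRearr f s * deriv φ s) with hGdef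
  have hpiece : ∀ j, j < N →
      ∫⁻ s in Set.Ioc (tV (j+1)) (tV j), G s ≤ ENNReal.ofReal (4 / N) := by
    intro j hj
    have hstep1 : ∫⁻ s in Set.Ioc (tV (j+1)) (tV j), G s
        ≤ ∫⁻ s in Set.Ioc (tV (j+1)) (tV j),
            ENNReal.ofReal (bV j) * ENNReal.ofReal (deriv φ s) := by
      apply lintegral_mono_ae
      rw [ae_restrict_iff' measurableSet_Ioc]
      refine ae_of_all _ fun s hs => ?_
      have hd : decRearr f s ≤ bV j :=
        hdec_le s (bV j) (hb_pos j).le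
          ((hμlevel j hj).trans (ENNReal.ofReal_le_ofReal hs.1.le))
      show ENNReal.ofReal (decRearr f s * deriv φ s)
          ≤ ENNReal.ofReal (bV j) * ENNReal.ofReal (deriv φ s)
      rcases le_or_gt 0 (deriv φ s) with hds | hds
      · rw [← ENNReal.ofReal_mul (hb_pos j).le]
        exact ENNReal.ofReal_le_ofReal (mul_le_mul_of_nonneg_right hd hds)
      · have hneg : decRearr f s * deriv φ s ≤ 0 := by
          have := mul_nonneg (hdec_nonneg s) (neg_nonneg.2 hds.le)
          nlinarith
        rw [ENNReal.ofReal_of_nonpos hneg]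
        exact zero_le
    have hstep2 : ∫⁻ s in Set.Ioc (tV (j+1)) (tV j),
          ENNReal.ofReal (bV j) * ENNReal.ofReal (deriv φ s)
        = ENNReal.ofReal (bV j) *
          ∫⁻ s in Set.Ioc (tV (j+1)) (tV j), ENNReal.ofReal (deriv φ s) :=
      lintegral_const_mul _ (ENNReal.measurable_ofReal.comp (measurable_deriv φ))
    have hstep3 : ∫⁻ s in Set.Ioc (tV (j+1)) (tV j), ENNReal.ofReal (deriv φ s)
        ≤ ENNReal.ofReal (φ (2 * tV j)) := by
      refine le_trans (lintegral_mono_set ?_) (lintegral_deriv_le hφ (ht_pos j hj) (ht_le4 j))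
      intro s hs
      exact ⟨lt_of_le_of_lt (ht_nonneg (j+1)) hs.1, hs.2⟩
    have hstep4 : ENNReal.ofReal (bV j) * ENNReal.ofReal (φ (2 * tV j))
        ≤ ENNReal.ofReal (4 / N) := by
      rw [← ENNReal.ofReal_mul (hb_pos j).le]
      apply ENNReal.ofReal_le_ofReal
      have h2t : φ (2 * tV j) ≤ 4 * φ (m j) := by
        have ha1 : φ (2 * tV j) ≤ φ (4 * m j) :=
          phi_mono' hφ (by linarith [ht_nonneg j]) (by linarith [ht_le j])
            (by linarith [hmle j])
        have ha2 : φ (4 * m j) ≤ 4 * φ (m j) :=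
          phi_quadruple hφ (hmpos j).le (by linarith [hmle j])
        linarith
      calc bV j * φ (2 * tV j) ≤ bV j * (4 * φ (m j)) := by nlinarith [hb_pos j, h2t]
        _ = 4 * (bV j * φ (m j)) := by ring
        _ = 4 * (1 / N) := by rw [hbφ j]
        _ = 4 / (N:ℝ) := by ring
    calc ∫⁻ s in Set.Ioc (tV (j+1)) (tV j), G s
        ≤ ∫⁻ s in Set.Ioc (tV (j+1)) (tV j),
            ENNReal.ofReal (bV j) * ENNReal.ofReal (deriv φ s) := hstep1
      _ = ENNReal.ofReal (bV j) *
          ∫⁻ s in Set.Ioc (tV (j+1)) (tV j), ENNReal.ofReal (deriv φ s) := hstep2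
      _ ≤ ENNReal.ofReal (bV j) * ENNReal.ofReal (φ (2 * tV j)) := mul_le_mul_right hstep3 _
      _ ≤ ENNReal.ofReal (4 / N) := hstep4
  have hind : ∀ d : ℕ, d ≤ N →
      ∫⁻ s in Set.Ioc (0:ℝ) (tV (N - d)), G s ≤ (d : ℝ≥0∞) * ENNReal.ofReal (4 / N) := by
    intro d
    induction d with
    | zero =>
        intro _
        have h0 : N - 0 = N := by omega
        rw [h0, htN]
        simp
    | succ d ih =>
        intro hdN
        have hj : N - (d+1) < N := by omega
        set j := N - (d+1) with hjdef
        have hsucc : j + 1 = N - d := by omega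
        have hunion : Set.Ioc (0:ℝ) (tV j)
            = Set.Ioc (0:ℝ) (tV (j+1)) ∪ Set.Ioc (tV (j+1)) (tV j) :=
          (Set.Ioc_union_Ioc_eq_Ioc (ht_nonneg (j+1)) (ht_mono j)).symm
        rw [hunion, lintegral_union measurableSet_Ioc (Set.Ioc_disjoint_Ioc_of_le le_rfl)]
        have hih := ih (by omega)
        rw [← hsucc] at hih
        calc (∫⁻ s in Set.Ioc (0:ℝ) (tV (j+1)), G s)
              + ∫⁻ s in Set.Ioc (tV (j+1)) (tV j), G s
            ≤ (d : ℝ≥0∞) * ENNReal.ofReal (4/N) + ENNReal.ofReal (4/N) :=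
              add_le_add hih (hpiece j hj)
          _ = ((d+1 : ℕ) : ℝ≥0∞) * ENNReal.ofReal (4/N) := by
              push_cast
              ring
  have hmain0 : ∫⁻ s in Set.Ioc (0:ℝ) (tV 0), G s ≤ ENNReal.ofReal 4 := by
    have h := hind N le_rfl
    rw [Nat.sub_self] at h
    calc ∫⁻ s in Set.Ioc (0:ℝ) (tV 0), G s ≤ (N : ℝ≥0∞) * ENNReal.ofReal (4 / N) := h
      _ = ENNReal.ofReal ((N : ℝ) * (4 / N)) := by
          rw [← ENNReal.ofReal_natCast N, ← ENNReal.ofReal_mul (by positivity)]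
      _ = ENNReal.ofReal 4 := by
          congr 1
          field_simp
  have htail : ∫⁻ s in Set.Ioc (tV 0) (1:ℝ), G s = 0 := by
    have hz : ∀ s ∈ Set.Ioc (tV 0) (1:ℝ), G s = (fun _ => (0:ℝ≥0∞)) s := by
      intro s hs
      have hd0 : decRearr f s = 0 :=
        le_antisymm (hdec_le s 0 le_rfl (hμlevel0.trans (ENNReal.ofReal_le_ofReal hs.1.le)))
          (hdec_nonneg s)
      show ENNReal.ofReal (decRearr f s * deriv φ s) = 0
      rw [hd0, zero_mul, ENNReal.ofReal_zero]
    rw [setLIntegral_congr_fun measurableSet_Ioc hz, lintegral_zero]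
  have hlor : lorentzNorm φ f ≤ ENNReal.ofReal 4 := by
    have hsplit : Set.Ioc (0:ℝ) 1 = Set.Ioc (0:ℝ) (tV 0) ∪ Set.Ioc (tV 0) 1 :=
      (Set.Ioc_union_Ioc_eq_Ioc (ht_nonneg 0) (by linarith [ht_le4 0])).symm
    rw [lorentzNorm, ofReal_limZero_eq_zero hφ hφ0, mul_zero, zero_add]
    show (∫⁻ s in Set.Ioc (0:ℝ) 1, G s) ≤ ENNReal.ofReal 4
    calc ∫⁻ s in Set.Ioc (0:ℝ) 1, G s
        = (∫⁻ s in Set.Ioc (0:ℝ) (tV 0), G s) + ∫⁻ s in Set.Ioc (tV 0) 1, G s := by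
          rw [hsplit, lintegral_union measurableSet_Ioc (Set.Ioc_disjoint_Ioc_of_le le_rfl)]
      _ ≤ ENNReal.ofReal 4 + 0 := by
          rw [htail]
          exact add_le_add hmain0 le_rfl
      _ = ENNReal.ofReal 4 := by rw [add_zero]
  -- lower bound for the cost of any admissible decomposition
  have hμuniv : μ01 Set.univ = 1 := by
    rw [μ01, Measure.restrict_apply_univ, Real.volume_Icc]
    norm_num
  have hQA : ∀ g : ℕ → ℝ → ℝ, Admissible f g →
      ENNReal.ofReal (ψ (M:ℝ) / 8) ≤ seqCost φ ψ g := by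
    intro g hg
    obtain ⟨hgm, hgtop, hgpos, hgle⟩ := hg
    set A : ℕ → ℝ≥0∞ := fun n => eLpNorm (g n) ⊤ μ01 with hAdef
    set ℓ : ℕ → ℝ≥0∞ := fun n => eLpNorm (g n) 1 μ01 with hℓdef
    have hgofReal : ∀ n, AEMeasurable (fun x => ENNReal.ofReal (g n x)) μ01 :=
      fun n => ENNReal.measurable_ofReal.comp_aemeasurable (hgm n)
    have hℓ_eq : ∀ n, ℓ n = ∫⁻ x, ENNReal.ofReal (g n x) ∂μ01 := by
      intro n
      show eLpNorm (g n) 1 μ01 = _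
      rw [eLpNorm_one_eq_lintegral_enorm]
      exact lintegral_congr fun x => Real.enorm_eq_ofReal (hgpos n x)
    have hg_ae_le : ∀ n, ∀ᵐ x ∂μ01, ENNReal.ofReal (g n x) ≤ A n := by
      intro n
      filter_upwards [ae_le_eLpNormEssSup (f := g n) (μ := μ01)] with x hx
      calc ENNReal.ofReal (g n x) = ‖g n x‖ₑ :=
            (Real.enorm_eq_ofReal (hgpos n x)).symm
        _ ≤ eLpNormEssSup (g n) μ01 := hx
        _ = A n := by rw [hAdef]; exact eLpNorm_exponent_top.symm
    have hℓ_le_A : ∀ n, ℓ n ≤ A n := by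
      intro n
      rw [hℓ_eq n]
      calc ∫⁻ x, ENNReal.ofReal (g n x) ∂μ01 ≤ ∫⁻ _x, A n ∂μ01 :=
          lintegral_mono_ae (hg_ae_le n)
        _ = A n * μ01 Set.univ := lintegral_const _
        _ = A n := by rw [hμuniv, mul_one]
    have hAtop : ∀ n, A n ≠ ⊤ := fun n => (hgtop n).ne
    have hℓtop : ∀ n, ℓ n ≠ ⊤ := fun n => (lt_of_le_of_lt (hℓ_le_A n) (hgtop n)).ne
    set ℓI : ℕ → ℕ → ℝ≥0∞ := fun n k => ∫⁻ x in Iset k, ENNReal.ofReal (g n x) ∂μ01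
      with hℓIdef
    have hℓI_le_A : ∀ n k, k < N → ℓI n k ≤ A n * ENNReal.ofReal (m k) := by
      intro n k hk
      show (∫⁻ x in Iset k, ENNReal.ofReal (g n x) ∂μ01) ≤ A n * ENNReal.ofReal (m k)
      calc ∫⁻ x in Iset k, ENNReal.ofReal (g n x) ∂μ01
          ≤ ∫⁻ _x in Iset k, A n ∂μ01 :=
            lintegral_mono_ae (ae_restrict_of_ae (hg_ae_le n))
        _ = A n * μ01 (Iset k) := by rw [lintegral_const, Measure.restrict_apply_univ]
        _ = A n * ENNReal.ofReal (m k) := by rw [hμI k hk]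
    have hℓI_le_ℓ : ∀ n k, ℓI n k ≤ ℓ n := by
      intro n k
      rw [hℓ_eq n]
      exact setLIntegral_le_lintegral _ _
    have hcover : ∀ k, k < N → ENNReal.ofReal (bV k * m k) ≤ ∑' n, ℓI n k := by
      intro k hk
      have hfI : ∫⁻ x in Iset k, ENNReal.ofReal |f x| ∂μ01
          = ENNReal.ofReal (bV k) * ENNReal.ofReal (m k) := by
        rw [setLIntegral_congr_fun measurableSet_Ico
          (fun y hy => by
            rw [hf_on k hk y hy, abs_of_nonneg (hb_pos k).le]),
          lintegral_const, Measure.restrict_apply_univ, hμI k hk]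
      calc ENNReal.ofReal (bV k * m k)
          = ∫⁻ x in Iset k, ENNReal.ofReal |f x| ∂μ01 := by
            rw [hfI, ← ENNReal.ofReal_mul (hb_pos k).le]
        _ ≤ ∫⁻ x in Iset k, ∑' n, ENNReal.ofReal (g n x) ∂μ01 :=
            lintegral_mono_ae (ae_restrict_of_ae hgle)
        _ = ∑' n, ℓI n k := lintegral_tsum (fun n => (hgofReal n).restrict)
    set Bk : ℕ → ℝ≥0∞ := fun k => ENNReal.ofReal (bV k * m k) with hBkdef
    have hBk0 : ∀ k, Bk k ≠ 0 := by
      intro k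
      show ENNReal.ofReal (bV k * m k) ≠ 0
      simp only [ne_eq, ENNReal.ofReal_eq_zero, not_le]
      exact mul_pos (hb_pos k) (hmpos k)
    have hBktop : ∀ k, Bk k ≠ ⊤ := fun k => ENNReal.ofReal_ne_top
    set α : ℕ → ℕ → ℝ≥0∞ := fun n k => min (ℓI n k / Bk k) 1 with hαdef
    have h2' : ∀ n k, k < N → α n k ≤ 1 := fun n k _ => min_le_right _ _
    have h1' : ∀ k, k < N → 1 ≤ ∑' n, α n k := by
      intro k hk
      by_cases hall : ∀ n, ℓI n k / Bk k ≤ 1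
      · calc (1:ℝ≥0∞) = Bk k / Bk k := (ENNReal.div_self (hBk0 k) (hBktop k)).symm
          _ ≤ (∑' n, ℓI n k) / Bk k :=
              ENNReal.div_le_div_right (hcover k hk) _
          _ = ∑' n, ℓI n k / Bk k := by
              simp only [div_eq_mul_inv]
              exact ENNReal.tsum_mul_right.symm
          _ = ∑' n, α n k := tsum_congr (fun n => (min_eq_left (hall n)).symm)
      · push_neg at hall
        obtain ⟨n0, hn0⟩ := hall
        have hmin1 : α n0 k = 1 := min_eq_right hn0.le
        calc (1:ℝ≥0∞) = α n0 k := hmin1.symm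
          _ ≤ ∑' n, α n k := ENNReal.le_tsum n0
    set costn : ℕ → ℝ≥0∞ := fun n => ENNReal.ofReal
      (ψ ((n : ℝ) + 1) * (A n).toReal * φ ((ℓ n / A n).toReal)) with hcostdef
    -- the fundamental pairwise estimate
    have hpair : ∀ (n j k : ℕ), j ≤ k → k < N → ∀ R : ℝ, 0 < R →
        R * φ (m k) ≤ φ (m j * (φ (m k) / φ (m j))) →
        min (α n j) (α n k) * ENNReal.ofReal (ψ ((n:ℝ)+1) * R / N) ≤ costn n := by
      intro n j k hjk hkN R hR hRφ
      have hjN : j < N := lt_of_le_of_lt hjk hkN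
      set w' := min (α n j) (α n k) with hw'def
      rcases eq_or_ne w' 0 with h0 | h0
      · rw [h0, zero_mul]
        exact zero_le
      have hw'le : w' ≤ 1 := le_trans (min_le_right _ _) (h2' n k hkN)
      have hw'top : w' ≠ ⊤ := (lt_of_le_of_lt hw'le (by norm_num)).ne
      set w := w'.toReal with hwdef
      have hw_pos : 0 < w := ENNReal.toReal_pos h0 hw'top
      have hw_le1 : w ≤ 1 := by
        have := ENNReal.toReal_mono (by norm_num) hw'le
        simpa using this
      have hw'_eq : w' = ENNReal.ofReal w := (ENNReal.ofReal_toReal hw'top).symm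
      have hcov : ∀ i, i < N → w' ≤ α n i →
          ENNReal.ofReal (w * (bV i * m i)) ≤ ℓI n i := by
        intro i hiN hle
        have ha1 : w' ≤ ℓI n i / Bk i := le_trans hle (min_le_left _ _)
        have ha2 : w' * Bk i ≤ ℓI n i :=
          (ENNReal.le_div_iff_mul_le (Or.inl (hBk0 i)) (Or.inl (hBktop i))).1 ha1
        calc ENNReal.ofReal (w * (bV i * m i))
            = ENNReal.ofReal w * Bk i := by
              rw [hBkdef, ← ENNReal.ofReal_mul hw_pos.le]
          _ = w' * Bk i := by rw [hw'_eq]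
          _ ≤ ℓI n i := ha2
      have hcovj := hcov j hjN (min_le_left _ _)
      have hcovk := hcov k hkN (min_le_right _ _)
      set Ar := (A n).toReal with hArdef
      have hAr_nonneg : 0 ≤ Ar := ENNReal.toReal_nonneg
      have hwbk : w * bV k ≤ Ar := by
        have ha1 : ENNReal.ofReal (w * (bV k * m k)) ≤ A n * ENNReal.ofReal (m k) :=
          hcovk.trans (hℓI_le_A n k hkN)
        have ha2 := ENNReal.toReal_mono
          (by exact ENNReal.mul_ne_top (hAtop n) ENNReal.ofReal_ne_top) ha1
        rw [ENNReal.toReal_ofReal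
            (mul_nonneg hw_pos.le (mul_nonneg (hb_pos k).le (hmpos k).le)),
          ENNReal.toReal_mul, ENNReal.toReal_ofReal (hmpos k).le] at ha2
        have := (mul_le_mul_iff_of_pos_right (hmpos k)).1 (by nlinarith [ha2] : (w * bV k) * m k ≤ Ar * m k)
        linarith
      have hAr_pos : 0 < Ar := lt_of_lt_of_le (mul_pos hw_pos (hb_pos k)) hwbk
      set Lr := (ℓ n).toReal with hLrdef
      have hLr_le : Lr ≤ Ar := ENNReal.toReal_mono (hAtop n) (hℓ_le_A n)
      have hwbj : w * (bV j * m j) ≤ Lr := by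
        have ha1 : ENNReal.ofReal (w * (bV j * m j)) ≤ ℓ n :=
          hcovj.trans (hℓI_le_ℓ n j)
        have ha2 := ENNReal.toReal_mono (hℓtop n) ha1
        rwa [ENNReal.toReal_ofReal
          (mul_nonneg hw_pos.le (mul_nonneg (hb_pos j).le (hmpos j).le))] at ha2
      have hs0_le_t0 : w * (bV j * m j) ≤ w * bV k := by
        have ha1 : bV j * m j ≤ bV j := by nlinarith [hb_pos j, hmle1 j, hmpos j]
        have ha2 : bV j ≤ bV k := hb_mono j k hjk
        nlinarith [hw_pos]
      have ht0_pos : 0 < w * bV k := mul_pos hw_pos (hb_pos k)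
      have hs0_nonneg : 0 ≤ w * (bV j * m j) := mul_nonneg hw_pos.le (mul_nonneg (hb_pos j).le (hmpos j).le)
      have hkey : (w * bV k) * φ ((w * (bV j * m j)) / (w * bV k)) ≤ Ar * φ (Lr / Ar) :=
        phi_keychain hφ ht0_pos hwbk hs0_nonneg hs0_le_t0 hwbj hLr_le
      have hdiv : (w * (bV j * m j)) / (w * bV k) = (bV j * m j) / bV k :=
        mul_div_mul_left _ _ (ne_of_gt hw_pos)
      have harg : (bV j * m j) / bV k = m j * (φ (m k) / φ (m j)) := by
        show ((1 / ((N:ℝ) * φ (m j))) * m j) / (1 / ((N:ℝ) * φ (m k)))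
            = m j * (φ (m k) / φ (m j))
        rw [div_div_eq_mul_div, div_one]
        field_simp [(hφm j).ne', (hφm k).ne', hNr.ne']
      have hlow : w * R / (N:ℝ) ≤ Ar * φ (Lr / Ar) := by
        have ha1 : (w * bV k) * φ ((w * (bV j * m j)) / (w * bV k))
            = w * (bV k * φ (m j * (φ (m k) / φ (m j)))) := by
          rw [hdiv, harg]
          ring
        have ha2 : w * (R * (bV k * φ (m k))) ≤ w * (bV k * φ (m j * (φ (m k) / φ (m j)))) := by
          have := mul_le_mul_of_nonneg_left hRφ (hb_pos k).le
          nlinarith [hw_pos, hb_pos k, hRφ]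
        calc w * R / (N:ℝ) = w * (R * (bV k * φ (m k))) := by
              rw [hbφ k]
              ring
          _ ≤ w * (bV k * φ (m j * (φ (m k) / φ (m j)))) := ha2
          _ = (w * bV k) * φ ((w * (bV j * m j)) / (w * bV k)) := ha1.symm
          _ ≤ Ar * φ (Lr / Ar) := hkey
      have hcost_eq : costn n
          = ENNReal.ofReal (ψ ((n:ℝ)+1) * Ar * φ (Lr / Ar)) := by
        show ENNReal.ofReal (ψ ((n : ℝ) + 1) * (A n).toReal * φ ((ℓ n / A n).toReal)) = _
        rw [ENNReal.toReal_div]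
      rw [hw'_eq, hcost_eq, ← ENNReal.ofReal_mul hw_pos.le]
      apply ENNReal.ofReal_le_ofReal
      have hψn : 0 ≤ ψ ((n:ℝ)+1) := psi_nonneg hψ (by positivity)
      calc w * (ψ ((n:ℝ)+1) * R / N) = ψ ((n:ℝ)+1) * (w * R / N) := by ring
        _ ≤ ψ ((n:ℝ)+1) * (Ar * φ (Lr/Ar)) := mul_le_mul_of_nonneg_left hlow hψn
        _ = ψ ((n:ℝ)+1) * Ar * φ (Lr/Ar) := by ring
    -- specialize to the hypotheses of `comb`
    have hψmono : ∀ n : ℕ, ψ 1 ≤ ψ ((n:ℝ)+1) := by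
      intro n
      apply hψ.mono (Set.mem_Ici.2 zero_le_one) (Set.mem_Ici.2 (by positivity))
      have : (0:ℝ) ≤ n := Nat.cast_nonneg n
      linarith
    have h3' : ∀ n k, k < N → M ≤ n →
        α n k * ENNReal.ofReal (ψ (M:ℝ) / N) ≤ costn n := by
      intro n k hk hMn
      have hRφ : (1:ℝ) * φ (m k) ≤ φ (m k * (φ (m k) / φ (m k))) := by
        rw [div_self (hφm k).ne', mul_one, one_mul]
      have h := hpair n k k le_rfl hk 1 one_pos hRφ
      rw [min_self] at h
      refine le_trans ?_ h
      apply mul_le_mul_right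
      apply ENNReal.ofReal_le_ofReal
      have hψle : ψ (M:ℝ) ≤ ψ ((n:ℝ)+1) := by
        apply hψ.mono (Set.mem_Ici.2 hMr.le) (Set.mem_Ici.2 (by positivity))
        have : (M:ℝ) ≤ n := Nat.cast_le.2 hMn
        linarith
      rw [mul_one]
      exact div_le_div_of_nonneg_right hψle hNr.le
    have h4' : ∀ n j k, j < N → k < N → j ≠ k →
        min (α n j) (α n k) * ENNReal.ofReal (ψ 1 * Q / N) ≤ costn n := by
      intro n j k hjN hkN hne
      have hψle : ψ 1 * Q / (N:ℝ) ≤ ψ ((n:ℝ)+1) * Q / N :=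
        div_le_div_of_nonneg_right
          (mul_le_mul_of_nonneg_right (hψmono n) hQ0.le) hNr.le
      rcases lt_or_gt_of_ne hne with h | h
      · exact le_trans (mul_le_mul_right (ENNReal.ofReal_le_ofReal hψle) _)
          (hpair n j k h.le hkN Q hQ0 (hC8 j k h))
      · rw [min_comm]
        exact le_trans (mul_le_mul_right (ENNReal.ofReal_le_ofReal hψle) _)
          (hpair n k j h.le hjN Q hQ0 (hC8 k j h))
    have hseq : seqCost φ ψ g = ∑' n, costn n := rfl
    rw [hseq]
    exact comb hψ hM hNdef hQle α costn h1' h2' h3' h4'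
  -- conclusion
  have hQAle : ENNReal.ofReal (ψ (M:ℝ) / 8) ≤ QANorm φ ψ f :=
    le_iInf (fun g => le_iInf (fun hg => hQA g hg))
  have hup := hupper f hfmeas.aemeasurable
  have hchain : ENNReal.ofReal (ψ (M:ℝ) / 8) ≤ ENNReal.ofReal (K2 * 4) := by
    calc ENNReal.ofReal (ψ (M:ℝ) / 8) ≤ QANorm φ ψ f := hQAle
      _ ≤ ENNReal.ofReal K2 * lorentzNorm φ f := hup
      _ ≤ ENNReal.ofReal K2 * ENNReal.ofReal 4 := mul_le_mul_right hlor _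
      _ = ENNReal.ofReal (K2 * 4) := (ENNReal.ofReal_mul hK2.le).symm
  rw [ENNReal.ofReal_le_ofReal_iff (by positivity)] at hchain
  linarith

end Stmt19Aux

/-- necessity in `QA_{φ,ψ} = Λ_φ ↔ ψ ≍ 1`: if the quasi-norm `‖·‖_{φ,ψ}` is
equivalent to the Lorentz norm `‖·‖_{Λ_φ}`, then `ψ` is bounded on `[1,∞)`. -/
theorem stmt19 {φ ψ : ℝ → ℝ} (hφ : IsPhi φ) (hψ : IsPsi ψ)
    (hφ0 : Tendsto φ (𝓝[>] 0) (𝓝 0))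
    (hφslope : Tendsto (fun t => φ t / t) (𝓝[>] 0) atTop)
    (c p : ℝ) (hc : 0 < c) (hc1 : c < 1) (hp : 0 < p) (hp1 : p ≤ 1)
    (hreg : MonotoneOn (fun t => φ t / t ^ c) (Set.Ioc 0 p))
    (C : ℝ) (hC : 1 ≤ C) (hψC : ∀ n : ℕ, 1 ≤ n → ψ ((n : ℝ) ^ 2) ≤ C * ψ (n : ℝ))
    (hequiv : ∃ K1 K2 : ℝ, 0 < K1 ∧ 0 < K2 ∧ ∀ f : ℝ → ℝ, AEMeasurable f μ01 →
      ENNReal.ofReal K1 * lorentzNorm φ f ≤ QANorm φ ψ f ∧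
      QANorm φ ψ f ≤ ENNReal.ofReal K2 * lorentzNorm φ f) :
    ∃ M : ℝ, ∀ t : ℝ, 1 ≤ t → ψ t ≤ M := by
  obtain ⟨K1, K2, hK1, hK2, hbound⟩ := hequiv
  have hupper : ∀ f : ℝ → ℝ, AEMeasurable f μ01 →
      QANorm φ ψ f ≤ ENNReal.ofReal K2 * lorentzNorm φ f :=
    fun f hf => (hbound f hf).2
  refine ⟨32 * K2, fun t ht => ?_⟩
  have hn2 : 2 ≤ max 2 ⌈t⌉₊ := le_max_left _ _
  have htn : t ≤ (max 2 ⌈t⌉₊ : ℕ) := by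
    have h1 : t ≤ ⌈t⌉₊ := Nat.le_ceil t
    have h2 : ((⌈t⌉₊ : ℕ) : ℝ) ≤ ((max 2 ⌈t⌉₊ : ℕ) : ℝ) := Nat.cast_le.2 (le_max_right _ _)
    linarith
  have hψt : ψ t ≤ ψ ((max 2 ⌈t⌉₊ : ℕ) : ℝ) :=
    hψ.mono (Set.mem_Ici.2 (by linarith)) (Set.mem_Ici.2 (by positivity)) htn
  exact le_trans hψt
    (Stmt19Aux.main_bound hφ hψ hφ0 hφslope hc hc1 hp hp1 hreg hK2 hupper _ hn2)
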